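/- Let n ≥ 2 and let H be a finite connected graph of diameter at least 2. Then Kₙ □ H is 2-distance-balanced if and only if H is both 2-distance-balanced and 1-distance-balanced. -/

import Mathlib

open SimpleGraph

/-- The set of vertices of `G` strictly closer to `u` than to `v`. -/
def closerSet {V : Type*} (G : SimpleGraph V) (u v : V) : Set V :=
  {x | G.dist x u < G.dist x v}

/-- `G` is `ℓ`-distance-balanced: for every pair of vertices at distance `ℓ`, the number of
vertices strictly closer to the first equals the number strictly closer to the second. -/
def IsDistBalanced {V : Type*} (G : SimpleGraph V) (ℓ : ℕ) : Prop :=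
  ∀ u v : V, G.dist u v = ℓ → (closerSet G u v).ncard = (closerSet G v u).ncard

private lemma walkProj {α β : Type*} {G : SimpleGraph α} {H : SimpleGraph β} :
    ∀ {x y : α × β} (w : (G □ H).Walk x y),
      ∃ (w1 : G.Walk x.1 y.1) (w2 : H.Walk x.2 y.2), w1.length + w2.length ≤ w.length
  | _, _, Walk.nil => ⟨Walk.nil, Walk.nil, by simp⟩
  | x, y, Walk.cons h w => by
    obtain ⟨w1, w2, hw⟩ := walkProj w
    rcases boxProd_adj.mp h with ⟨ha, hb⟩ | ⟨hb, ha⟩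
    · exact ⟨Walk.cons ha w1, w2.copy hb.symm rfl, by
        simp only [Walk.length_cons, Walk.length_copy]; omega⟩
    · exact ⟨w1.copy ha.symm rfl, Walk.cons hb w2, by
        simp only [Walk.length_cons, Walk.length_copy]; omega⟩

private lemma boxProd_dist {α β : Type*} {G : SimpleGraph α} {H : SimpleGraph β}
    (hG : G.Connected) (hH : H.Connected) (x y : α × β) :
    (G □ H).dist x y = G.dist x.1 y.1 + H.dist x.2 y.2 := by
  refine le_antisymm ?_ ?_
  · obtain ⟨p1, hp1⟩ := hG.exists_walk_length_eq_dist x.1 y.1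
    obtain ⟨p2, hp2⟩ := hH.exists_walk_length_eq_dist x.2 y.2
    have hle := dist_le ((p1.boxProdLeft H x.2).append (p2.boxProdRight G y.1))
    have e1 : (p1.boxProdLeft H x.2).length = p1.length := Walk.length_map _ _
    have e2 : (p2.boxProdRight G y.1).length = p2.length := Walk.length_map _ _
    rwa [Walk.length_append, e1, e2, hp1, hp2] at hle
  · obtain ⟨w, hw⟩ := (hG.boxProd hH).exists_walk_length_eq_dist x y
    obtain ⟨w1, w2, hle⟩ := walkProj w
    calc G.dist x.1 y.1 + H.dist x.2 y.2 ≤ w1.length + w2.length :=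
          Nat.add_le_add (dist_le w1) (dist_le w2)
      _ ≤ w.length := hle
      _ = _ := hw

private lemma ncard_prod' {α β : Type*} (s : Set α) (t : Set β) :
    (s ×ˢ t).ncard = s.ncard * t.ncard := by
  rw [← Nat.card_coe_set_eq, ← Nat.card_coe_set_eq, ← Nat.card_coe_set_eq,
    ← Nat.card_prod]
  exact Nat.card_congr (Equiv.Set.prod s t)

theorem stmt12 {β : Type*} [Fintype β] (H : SimpleGraph β) (hH : H.Connected)
    (n : ℕ) (hn : 2 ≤ n) (hdiam : 2 ≤ H.diam) :
    IsDistBalanced ((⊤ : SimpleGraph (Fin n)) □ H) 2 ↔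
      (IsDistBalanced H 2 ∧ IsDistBalanced H 1) := by
  have hne : Nonempty (Fin n) := ⟨⟨0, by omega⟩⟩
  have hKc : (⊤ : SimpleGraph (Fin n)).Connected := connected_top
  have hdist : ∀ (a g : Fin n) (y h : β),
      ((⊤ : SimpleGraph (Fin n)) □ H).dist (a, y) (g, h)
        = (⊤ : SimpleGraph (Fin n)).dist a g + H.dist y h := fun a g y h =>
    boxProd_dist hKc hH (a, y) (g, h)
  -- Case A: same first coordinate.
  have setA : ∀ (g : Fin n) (h1 h2 : β),
      closerSet ((⊤ : SimpleGraph (Fin n)) □ H) (g, h1) (g, h2)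
        = (Set.univ : Set (Fin n)) ×ˢ closerSet H h1 h2 := by
    intro g h1 h2
    ext ⟨a, y⟩
    simp only [closerSet, Set.mem_setOf_eq, hdist, Set.mem_prod, Set.mem_univ, true_and]
    omega
  have cardA : ∀ (g : Fin n) (h1 h2 : β),
      (closerSet ((⊤ : SimpleGraph (Fin n)) □ H) (g, h1) (g, h2)).ncard
        = n * (closerSet H h1 h2).ncard := by
    intro g h1 h2
    rw [setA, ncard_prod', Set.ncard_univ, Nat.card_eq_fintype_card, Fintype.card_fin]
  -- Case B: distinct first coordinates, adjacent second coordinates.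
  have cardB : ∀ (g1 g2 : Fin n) (h1 h2 : β), g1 ≠ g2 → H.Adj h1 h2 →
      (closerSet ((⊤ : SimpleGraph (Fin n)) □ H) (g1, h1) (g2, h2)).ncard
        = {y | H.dist y h1 = H.dist y h2}.ncard
          + (1 + (({g1, g2}ᶜ : Set (Fin n))).ncard) * (closerSet H h1 h2).ncard := by
    intro g1 g2 h1 h2 hg hadj
    have h21 : H.dist h1 h2 = 1 := dist_eq_one_iff_adj.mpr hadj
    have setB : closerSet ((⊤ : SimpleGraph (Fin n)) □ H) (g1, h1) (g2, h2)
        = ({g1} : Set (Fin n)) ×ˢ {y | H.dist y h1 ≤ H.dist y h2}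
          ∪ (({g1, g2}ᶜ : Set (Fin n))) ×ˢ closerSet H h1 h2 := by
      ext ⟨a, y⟩
      have htri : H.dist y h2 ≤ H.dist y h1 + 1 := by
        have := hH.dist_triangle (u := y) (v := h1) (w := h2)
        omega
      simp only [closerSet, Set.mem_setOf_eq, hdist, Set.mem_union, Set.mem_prod,
        Set.mem_singleton_iff, Set.mem_compl_iff, Set.mem_insert_iff]
      rcases eq_or_ne a g1 with rfl | ha1
      · simp only [SimpleGraph.dist_self, dist_top_of_ne hg, eq_self_iff_true, true_and, hg,
          false_or, not_true, false_and, or_false]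
        constructor
        · intro hlt; omega
        · rintro hle; omega
      · rcases eq_or_ne a g2 with rfl | ha2
        · simp only [SimpleGraph.dist_self, dist_top_of_ne ha1, ha1, false_and, false_or,
            not_or, not_true, and_false, iff_false, not_lt]
          omega
        · simp only [dist_top_of_ne ha1, dist_top_of_ne ha2, ha1, ha2, false_and, false_or,
            not_or, not_false_iff, and_true, true_and, not_false_eq_true]
          omega
    have hdisj : Disjoint (({g1} : Set (Fin n)) ×ˢ {y | H.dist y h1 ≤ H.dist y h2})
        ((({g1, g2}ᶜ : Set (Fin n))) ×ˢ closerSet H h1 h2) := by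
      rw [Set.disjoint_left]
      rintro ⟨a, y⟩ h1' h2'
      simp only [Set.mem_prod, Set.mem_singleton_iff, Set.mem_compl_iff,
        Set.mem_insert_iff] at h1' h2'
      exact h2'.1 (Or.inl h1'.1)
    have hLE : {y | H.dist y h1 ≤ H.dist y h2}
        = closerSet H h1 h2 ∪ {y | H.dist y h1 = H.dist y h2} := by
      ext y; simp only [closerSet, Set.mem_setOf_eq, Set.mem_union]; omega
    have hdisj2 : Disjoint (closerSet H h1 h2) {y | H.dist y h1 = H.dist y h2} := by
      rw [Set.disjoint_left]
      intro y hy hy'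
      simp only [closerSet, Set.mem_setOf_eq] at hy hy'
      omega
    rw [setB, Set.ncard_union_eq hdisj (Set.toFinite _) (Set.toFinite _), hLE,
      ncard_prod', ncard_prod', Set.ncard_singleton,
      Set.ncard_union_eq hdisj2 (Set.toFinite _) (Set.toFinite _)]
    ring
  have Esym : ∀ h1 h2 : β, {y | H.dist y h2 = H.dist y h1} = {y | H.dist y h1 = H.dist y h2} := by
    intro h1 h2; ext y; exact eq_comm
  have Csym : ∀ g1 g2 : Fin n, ({g2, g1}ᶜ : Set (Fin n)) = ({g1, g2}ᶜ : Set (Fin n)) := by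
    intro g1 g2; rw [Set.pair_comm]
  constructor
  · intro hP2
    constructor
    · intro h1 h2 hd
      have h := hP2 (⟨0, by omega⟩, h1) (⟨0, by omega⟩, h2)
        (by rw [hdist, SimpleGraph.dist_self, hd])
      rw [cardA, cardA] at h
      exact Nat.eq_of_mul_eq_mul_left (by omega) h
    · intro h1 h2 hd
      have hadj : H.Adj h1 h2 := dist_eq_one_iff_adj.mp hd
      have hg : (⟨0, by omega⟩ : Fin n) ≠ ⟨1, by omega⟩ := by
        intro hc
        exact absurd (congrArg Fin.val hc) (by norm_num)
      have h := hP2 (⟨0, by omega⟩, h1) (⟨1, by omega⟩, h2)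
        (by rw [hdist, dist_top_of_ne hg, hd])
      rw [cardB _ _ _ _ hg hadj, cardB _ _ _ _ hg.symm hadj.symm, Esym, Csym] at h
      exact Nat.eq_of_mul_eq_mul_left (by omega) (Nat.add_left_cancel h)
  · rintro ⟨hH2, hH1⟩ ⟨g1, h1⟩ ⟨g2, h2⟩ huv
    rw [hdist] at huv
    rcases eq_or_ne g1 g2 with rfl | hg
    · rw [SimpleGraph.dist_self] at huv
      rw [cardA, cardA, hH2 h1 h2 (by omega)]
    · rw [dist_top_of_ne hg] at huv
      have hd1 : H.dist h1 h2 = 1 := by omega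
      have hadj : H.Adj h1 h2 := dist_eq_one_iff_adj.mp hd1
      rw [cardB _ _ _ _ hg hadj, cardB _ _ _ _ hg.symm hadj.symm, Esym, Csym,
        hH1 h1 h2 hd1]
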